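/- The set of points (z₁,z₂,z₃,z₄,z₅) ∈ ℂ⁵ satisfying z₁z₅ = z₄² and z₂z₃ = z₅² at which the two gradient vectors (z₅, 0, 0, −2z₄, z₁) and (0, z₃, z₂, 0, −2z₅) are linearly dependent over ℂ is exactly the union of the three coordinate axes L₁ = {(z₁,0,0,0,0) : z₁ ∈ ℂ}, L₂ = {(0,z₂,0,0,0) : z₂ ∈ ℂ}, L₃ = {(0,0,z₃,0,0) : z₃ ∈ ℂ}. -/
import Mathlib


/-- The set of points of the complete intersection `{z₁z₅ = z₄², z₂z₃ = z₅²} ⊂ ℂ⁵`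
where the gradients `(z₅,0,0,−2z₄,z₁)` and `(0,z₃,z₂,0,−2z₅)` of the defining
polynomials are linearly dependent over `ℂ` is exactly the union of the three
coordinate axes `L₁, L₂, L₃`. -/
theorem stmt18 :
    {z : ℂ × ℂ × ℂ × ℂ × ℂ |
        z.1 * z.2.2.2.2 = z.2.2.2.1 ^ 2 ∧ z.2.1 * z.2.2.1 = z.2.2.2.2 ^ 2 ∧
        ∃ a b : ℂ, (a, b) ≠ (0, 0) ∧
          a • ((z.2.2.2.2, 0, 0, -2 * z.2.2.2.1, z.1) : ℂ × ℂ × ℂ × ℂ × ℂ) +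
              b • ((0, z.2.2.1, z.2.1, 0, -2 * z.2.2.2.2) : ℂ × ℂ × ℂ × ℂ × ℂ) = 0} =
      {z : ℂ × ℂ × ℂ × ℂ × ℂ | ∃ a : ℂ, z = (a, 0, 0, 0, 0)} ∪
        {z : ℂ × ℂ × ℂ × ℂ × ℂ | ∃ a : ℂ, z = (0, a, 0, 0, 0)} ∪
        {z : ℂ × ℂ × ℂ × ℂ × ℂ | ∃ a : ℂ, z = (0, 0, a, 0, 0)} := by
  ext ⟨z1, z2, z3, z4, z5⟩
  simp only [Set.mem_setOf_eq, Set.mem_union, Prod.mk.injEq, Prod.smul_mk, Prod.mk_add_mk,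
    smul_eq_mul, Prod.ext_iff, Prod.fst_zero, Prod.snd_zero, ne_eq, not_and_or]
  constructor
  · rintro ⟨h1, h2, a, b, hab, e1, e2, e3, e4, e5⟩
    simp only [mul_zero, zero_add, add_zero, zero_mul] at e1 e2 e3 e4 e5
    by_cases ha : a = 0
    · subst ha
      have hb : b ≠ 0 := by rcases hab with h | h <;> simp_all
      have hz3 : z3 = 0 := (mul_eq_zero.mp e2).resolve_left hb
      have hz2 : z2 = 0 := (mul_eq_zero.mp e3).resolve_left hb
      have hz5 : z5 = 0 := by
        have hbz : b * z5 = 0 := by linear_combination (-(1:ℂ)/2) * e5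
        exact (mul_eq_zero.mp hbz).resolve_left hb
      have hz4 : z4 = 0 := by
        have : z4 ^ 2 = 0 := by rw [← h1, hz5, mul_zero]
        exact pow_eq_zero_iff (n := 2) (by norm_num) |>.mp this
      exact Or.inl (Or.inl ⟨z1, rfl, hz2, hz3, hz4, hz5⟩)
    · have hz5 : z5 = 0 := by
        rcases mul_eq_zero.mp e1 with h | h
        · exact absurd h ha
        · exact h
      have hz4 : z4 = 0 := by
        have : z4 ^ 2 = 0 := by rw [← h1, hz5, mul_zero]
        exact pow_eq_zero_iff (n := 2) (by norm_num) |>.mp this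
      have hz1 : z1 = 0 := by
        rw [hz5] at e5
        simpa [ha] using e5
      rw [hz5] at h2
      rcases (by simpa using h2 : z2 = 0 ∨ z3 = 0) with hz2 | hz3
    
      · exact Or.inr ⟨z3, hz1, hz2, rfl, hz4, hz5⟩
      · exact Or.inl (Or.inr ⟨z2, hz1, rfl, hz3, hz4, hz5⟩)
  · rintro ((⟨c, h1, h2, h3, h4, h5⟩ | ⟨c, h1, h2, h3, h4, h5⟩) | ⟨c, h1, h2, h3, h4, h5⟩)
    · subst h1; subst h2; subst h3; subst h4; subst h5
      exact ⟨by ring, by ring, 0, 1, by simp, by norm_num⟩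
    · subst h1; subst h2; subst h3; subst h4; subst h5
      exact ⟨by ring, by ring, 1, 0, by simp, by norm_num⟩
    · subst h1; subst h2; subst h3; subst h4; subst h5
      exact ⟨by ring, by ring, 1, 0, by simp, by norm_num⟩
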